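/- With O = Q Q* (Q ∈ ℍ^N with unit quaternion entries) and Ô quaternion Hermitian with largest eigenvalue λ₁, setting e(O) = ‖Ô − O‖_F / ‖O‖_F and noting ‖O‖_F = N: one has 1 − e(O) ≤ λ₁/N, and if additionally every diagonal entry of Ô equals 1 and every entry of Ô is a unit quaternion, then λ₁ ≤ N. -/

import Mathlib

set_option maxHeartbeats 1000000


noncomputable section

abbrev H := Quaternion ℝ

/-- Frobenius norm of a quaternion matrix. -/
def frobNorm {n : ℕ} (A : Matrix (Fin n) (Fin n) H) : ℝ :=
  Real.sqrt (∑ i, ∑ j, ‖A i j‖ ^ 2)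

open scoped RealInnerProductSpace

lemma frobNorm_nonneg {n : ℕ} (A : Matrix (Fin n) (Fin n) H) : 0 ≤ frobNorm A :=
  Real.sqrt_nonneg _

lemma re_mul_comm (a b : H) : (a * b).re = (b * a).re := by
  simp [Quaternion.re_mul]; ring

lemma re_sum {ι : Type*} (s : Finset ι) (f : ι → H) :
    (∑ i ∈ s, f i).re = ∑ i ∈ s, (f i).re :=
  map_sum (show H →ₗ[ℝ] ℝ from QuaternionAlgebra.reₗ _ _ _) f s

lemma mulVec_sq_bound {N : ℕ} (A : Matrix (Fin N) (Fin N) H) (v : Fin N → H) :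
    ∑ i, ‖A.mulVec v i‖ ^ 2 ≤ (∑ i, ∑ j, ‖A i j‖ ^ 2) * ∑ j, ‖v j‖ ^ 2 := by
  have h1 : ∀ i : Fin N, ‖A.mulVec v i‖ ^ 2 ≤ (∑ j, ‖A i j‖ ^ 2) * ∑ j, ‖v j‖ ^ 2 := by
    intro i
    have hle : ‖A.mulVec v i‖ ≤ ∑ j, ‖A i j‖ * ‖v j‖ := by
      simpa [Matrix.mulVec, dotProduct, norm_mul] using
        norm_sum_le Finset.univ (fun j => A i j * v j)
    calc ‖A.mulVec v i‖ ^ 2 ≤ (∑ j, ‖A i j‖ * ‖v j‖) ^ 2 :=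
          pow_le_pow_left₀ (norm_nonneg _) hle 2
      _ ≤ _ := Finset.sum_mul_sq_le_sq_mul_sq _ _ _
  calc ∑ i, ‖A.mulVec v i‖ ^ 2 ≤ ∑ i : Fin N, (∑ j, ‖A i j‖ ^ 2) * ∑ j, ‖v j‖ ^ 2 :=
        Finset.sum_le_sum fun i _ => h1 i
    _ = _ := by rw [← Finset.sum_mul]

abbrev E (N : ℕ) := PiLp 2 (fun _ : Fin N => H)

def Tmap {N : ℕ} (A : Matrix (Fin N) (Fin N) H) : E N →ₗ[ℝ] E N where
  toFun v := WithLp.toLp 2 (A.mulVec v)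
  map_add' x y := by simp [Matrix.mulVec_add]
  map_smul' r v := by
    ext i : 1
    simp [Matrix.mulVec, dotProduct, Finset.smul_sum, mul_smul_comm]

lemma Tmap_apply {N : ℕ} (A : Matrix (Fin N) (Fin N) H) (v : E N) (i : Fin N) :
    Tmap A v i = A.mulVec v i := rfl

lemma norm_sq_E {N : ℕ} (v : E N) : ‖v‖ ^ 2 = ∑ i, ‖v i‖ ^ 2 :=
  PiLp.norm_sq_eq_of_L2 _ _

lemma mulVec_norm_le {N : ℕ} (A : Matrix (Fin N) (Fin N) H) (v : E N) :
    ‖Tmap A v‖ ≤ frobNorm A * ‖v‖ := by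
  have hsq : ‖Tmap A v‖ ^ 2 ≤ (frobNorm A * ‖v‖) ^ 2 := by
    rw [mul_pow, frobNorm, Real.sq_sqrt (by positivity), norm_sq_E, norm_sq_E]
    exact mulVec_sq_bound A v
  have h := Real.sqrt_le_sqrt hsq
  rwa [Real.sqrt_sq (norm_nonneg _),
    Real.sqrt_sq (mul_nonneg (frobNorm_nonneg A) (norm_nonneg _))] at h

lemma Tmap_symm {N : ℕ} (A : Matrix (Fin N) (Fin N) H) (hA : A.IsHermitian) :
    (Tmap A).IsSymmetric := by
  intro x y
  simp only [PiLp.inner_apply, Quaternion.inner_def, Tmap, LinearMap.coe_mk, AddHom.coe_mk,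
    Matrix.mulVec, dotProduct]
  have hstar : ∀ i j : Fin N, star (A i j) = A j i := by
    intro i j
    conv_rhs => rw [← hA]
    rfl
  calc ∑ i, ((∑ j, A i j * x j) * star (y i)).re
      = ∑ i, ∑ j, (A i j * x j * star (y i)).re := by
        simp [Finset.sum_mul, re_sum]
    _ = ∑ j, ∑ i, (A i j * x j * star (y i)).re := Finset.sum_comm
    _ = ∑ j, ∑ i, (x j * star (A j i * y i)).re := by
        refine Finset.sum_congr rfl fun j _ => Finset.sum_congr rfl fun i _ => ?_
        rw [star_mul, hstar, re_mul_comm (A i j * x j), ← mul_assoc, re_mul_comm]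
    _ = ∑ j, (x j * star (∑ i, A j i * y i)).re := by
        simp [star_sum, Finset.mul_sum, re_sum]

/-- With `O = Q Q*` (`Q` of unit quaternions), `Ô` Hermitian with
largest eigenvalue `λ₁`, and `e(O) = ‖Ô − O‖_F / N`: one has `1 − e(O) ≤ λ₁/N`;
and if moreover all diagonal entries of `Ô` equal `1` and all entries are unit
quaternions, then `λ₁ ≤ N`. -/
theorem largest_eigenvalue_bounds (N : ℕ) (hN : 0 < N)
    (Q : Fin N → H) (hQ : ∀ i, ‖Q i‖ = 1)
    (O : Matrix (Fin N) (Fin N) H) (hO : O = Matrix.of fun i j => Q i * star (Q j))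
    (Ohat : Matrix (Fin N) (Fin N) H) (hHerm : Ohat.IsHermitian)
    (lam1 : ℝ)
    (hlam1 : ∃ v : Fin N → H, v ≠ 0 ∧ Ohat.mulVec v = fun i => v i * (lam1 : H))
    (hmax : ∀ (mu : ℝ) (v : Fin N → H), v ≠ 0 →
      (Ohat.mulVec v = fun i => v i * (mu : H)) → mu ≤ lam1)
    (e : ℝ) (he : e = frobNorm (Ohat - O) / N) :
    (1 - e ≤ lam1 / N) ∧
    ((∀ i, Ohat i i = 1) → (∀ i j, ‖Ohat i j‖ = 1) → lam1 ≤ N) := by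
  have hNR : (0:ℝ) < N := by exact_mod_cast hN
  constructor
  · -- Part 1
    haveI : Nonempty (Fin N) := ⟨⟨0, hN⟩⟩
    have hsym := Tmap_symm Ohat hHerm
    have heig := hsym.hasEigenvalue_iSup_of_finiteDimensional
    set μ : ℝ := ⨆ x : {x : E N // x ≠ 0},
        RCLike.re (⟪Tmap Ohat x, (x : E N)⟫ : ℝ) / ‖(x : E N)‖ ^ 2 with hμdef
    obtain ⟨v, hvmem, hv0⟩ := heig.exists_hasEigenvector
    have hv : Tmap Ohat v = μ • v := by
      have h := hvmem
      rw [Module.End.mem_eigenspace_iff] at h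
      exact_mod_cast h
    -- μ is a right eigenvalue of Ohat
    have hμlam : μ ≤ lam1 := by
      refine hmax μ v (by simpa using hv0) (funext fun i => ?_)
      have := congrArg (fun w : E N => w i) hv
      rw [Tmap_apply] at this
      rw [this, Quaternion.mul_coe_eq_smul]
      rfl
    -- Rayleigh quotient at Q
    set Qv : E N := WithLp.toLp 2 Q with hQvdef
    have hQv0 : Qv ≠ 0 := by
      intro h
      have h1 := hQ ⟨0, hN⟩
      have h0 : Qv ⟨0, hN⟩ = 0 := by rw [h]; rfl
      change ‖Qv ⟨0, hN⟩‖ = 1 at h1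
      rw [h0, norm_zero] at h1
      norm_num at h1
    have hQnsq : ‖Qv‖ ^ 2 = (N : ℝ) := by
      rw [norm_sq_E]
      simp [hQvdef, hQ]
    -- bound for BddAbove
    have hbdd : BddAbove (Set.range fun x : {x : E N // x ≠ 0} =>
        RCLike.re (⟪Tmap Ohat x, (x : E N)⟫ : ℝ) / ‖(x : E N)‖ ^ 2) := by
      refine ⟨frobNorm Ohat, ?_⟩
      rintro r ⟨x, rfl⟩
      have hx : (0:ℝ) < ‖(x : E N)‖ := norm_pos_iff.mpr x.2
      have h1 : RCLike.re (⟪Tmap Ohat x, (x : E N)⟫ : ℝ) ≤ frobNorm Ohat * ‖(x : E N)‖ ^ 2 := by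
        have h2 : (⟪Tmap Ohat x, (x : E N)⟫ : ℝ) ≤ ‖Tmap Ohat (x : E N)‖ * ‖(x : E N)‖ :=
          real_inner_le_norm _ _
        have h3 := mulVec_norm_le Ohat (x : E N)
        calc RCLike.re (⟪Tmap Ohat x, (x : E N)⟫ : ℝ)
            = (⟪Tmap Ohat x, (x : E N)⟫ : ℝ) := rfl
          _ ≤ ‖Tmap Ohat (x : E N)‖ * ‖(x : E N)‖ := h2
          _ ≤ (frobNorm Ohat * ‖(x : E N)‖) * ‖(x : E N)‖ := by
              exact mul_le_mul_of_nonneg_right h3 (norm_nonneg _)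
          _ = frobNorm Ohat * ‖(x : E N)‖ ^ 2 := by ring
      rw [div_le_iff₀ (by positivity)]
      calc RCLike.re (⟪Tmap Ohat x, (x : E N)⟫ : ℝ)
          ≤ frobNorm Ohat * ‖(x : E N)‖ ^ 2 := h1
        _ = _ := rfl
    -- compute inner product at Q
    have hOQ : Tmap O Qv = WithLp.toLp 2 (fun i => (N : H) * Q i) := by
      ext i : 1
      rw [Tmap_apply]
      simp only [Matrix.mulVec, dotProduct, hO, Matrix.of_apply]
      have : ∀ j, Q i * star (Q j) * Q j = Q i := by
        intro j
        rw [mul_assoc, Quaternion.star_mul_self]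
        have : Quaternion.normSq (Q j) = 1 := by
          rw [Quaternion.normSq_eq_norm_mul_self, hQ j]; ring
        rw [this]
        simp
      simp only [hQvdef, WithLp.ofLp_toLp, this]
      simp [Finset.sum_const, nsmul_eq_mul]
    have hinnerO : (⟪Tmap O Qv, Qv⟫ : ℝ) = (N:ℝ)^2 := by
      rw [hOQ]
      simp only [PiLp.inner_apply, Quaternion.inner_def]
      have : ∀ i : Fin N, (((N : H) * Q i) * star (Q i)).re = (N : ℝ) := by
        intro i
        rw [mul_assoc, Quaternion.self_mul_star]
        have h1 : Quaternion.normSq (Q i) = 1 := by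
          rw [Quaternion.normSq_eq_norm_mul_self, hQ i]; ring
        rw [h1]
        simp
      simp only [hQvdef, WithLp.ofLp_toLp, this]
      simp [Finset.sum_const]
      ring
    have hsplit : Tmap Ohat Qv = Tmap O Qv + Tmap (Ohat - O) Qv := by
      ext i : 1
      show Ohat.mulVec Qv i = O.mulVec Qv i + (Ohat - O).mulVec Qv i
      rw [Matrix.sub_mulVec, Pi.sub_apply]
      abel
    have hD : |(⟪Tmap (Ohat - O) Qv, Qv⟫ : ℝ)| ≤ frobNorm (Ohat - O) * (N:ℝ) := by
      calc |(⟪Tmap (Ohat - O) Qv, Qv⟫ : ℝ)| ≤ ‖Tmap (Ohat - O) Qv‖ * ‖Qv‖ :=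
            abs_real_inner_le_norm _ _
        _ ≤ (frobNorm (Ohat - O) * ‖Qv‖) * ‖Qv‖ :=
            mul_le_mul_of_nonneg_right (mulVec_norm_le _ _) (norm_nonneg _)
        _ = frobNorm (Ohat - O) * ‖Qv‖ ^ 2 := by ring
        _ = frobNorm (Ohat - O) * (N:ℝ) := by rw [hQnsq]
    have hfrob : frobNorm (Ohat - O) = (N:ℝ) * e := by
      rw [he]; field_simp
    have hinner : (N:ℝ)^2 - (N:ℝ)^2 * e ≤ (⟪Tmap Ohat Qv, Qv⟫ : ℝ) := by
      rw [hsplit, inner_add_left, hinnerO]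
      have := abs_le.mp hD
      rw [hfrob] at this
      nlinarith [this.1]
    have hray : (N:ℝ) - (N:ℝ) * e ≤
        RCLike.re (⟪Tmap Ohat Qv, Qv⟫ : ℝ) / ‖Qv‖ ^ 2 := by
      have : RCLike.re (⟪Tmap Ohat Qv, Qv⟫ : ℝ) = (⟪Tmap Ohat Qv, Qv⟫ : ℝ) := rfl
      rw [this, hQnsq, le_div_iff₀ hNR]
      nlinarith [hinner]
    have hμge : (N:ℝ) - (N:ℝ) * e ≤ μ := by
      refine le_trans hray ?_
      exact le_ciSup hbdd ⟨Qv, hQv0⟩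
    rw [le_div_iff₀ hNR]
    nlinarith [hμlam, hμge]
  · -- Part 2
    intro _ hunit
    obtain ⟨v, hv0, hv⟩ := hlam1
    have hS : 0 < ∑ j, ‖v j‖ ^ 2 := by
      obtain ⟨i, hi⟩ : ∃ i, v i ≠ 0 := by
        by_contra h; push_neg at h; exact hv0 (funext h)
      refine Finset.sum_pos' (fun j _ => by positivity) ⟨i, Finset.mem_univ i, pow_pos (norm_pos_iff.mpr hi) 2⟩
    have hb := mulVec_sq_bound Ohat v
    rw [hv] at hb
    have hl : ∑ i, ‖(fun i => v i * (lam1:H)) i‖ ^ 2 = lam1 ^ 2 * ∑ j, ‖v j‖ ^ 2 := by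
      simp only [norm_mul, Quaternion.norm_coe, Real.norm_eq_abs, mul_pow, sq_abs]
      rw [← Finset.sum_mul]
      ring
    have hA : (∑ i, ∑ j : Fin N, ‖Ohat i j‖ ^ 2) = (N:ℝ)^2 := by
      simp [hunit, Finset.sum_const]
      ring
    rw [hl, hA] at hb
    have hsq : lam1 ^ 2 ≤ (N:ℝ)^2 := le_of_mul_le_mul_right hb hS
    nlinarith [hsq, hNR]
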